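/- Let X be a Polish Abelian group and let A be a Borel subset of X which is Haar-thin. Then A is both Haar-null and Haar-meager in X. -/

import Mathlib

open Set Filter Topology Pointwise MeasureTheory

/-- A Borel set `A` in a topological Abelian group is *Haar-meager* if there is a continuous
map `f` from the Cantor cube `ℕ → Bool` such that `f ⁻¹' (A + x)` is meager for every `x`. -/
def HaarMeager {X : Type*} [TopologicalSpace X] [AddCommGroup X] (A : Set X) : Prop :=
  ∃ f : (ℕ → Bool) → X, Continuous f ∧ ∀ x : X, IsMeagre (f ⁻¹' ((fun a => a + x) '' A))

/-- A set `A` is *Haar-null* if there is a Borel probability measure `μ` on `X` such that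
`μ (A + x) = 0` for every `x ∈ X`. -/
def HaarNull {X : Type*} [MeasurableSpace X] [AddCommGroup X] (A : Set X) : Prop :=
  ∃ μ : Measure X, IsProbabilityMeasure μ ∧ ∀ x : X, μ ((fun a => a + x) '' A) = 0

/-- A subset `T` of the Cantor cube is *thin* if for every coordinate `n`, any two elements
of `T` agreeing at all coordinates except possibly `n` are equal. -/
def IsThinSet (T : Set (ℕ → Bool)) : Prop :=
  ∀ n : ℕ, ∀ s ∈ T, ∀ t ∈ T, (∀ m : ℕ, m ≠ n → s m = t m) → s = t

/-- A set `A` is *Haar-thin* if there is a continuous map `f` from the Cantor cube such that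
`f ⁻¹' (A + x)` is thin for every `x`. -/
def HaarThin {X : Type*} [TopologicalSpace X] [AddCommGroup X] (A : Set X) : Prop :=
  ∃ f : (ℕ → Bool) → X, Continuous f ∧ ∀ x : X, IsThinSet (f ⁻¹' ((fun a => a + x) '' A))

/-- A set `A` is *null-finite* if there is a null sequence `(x n)` such that
`{n | x n + y ∈ A}` is finite for every `y`. -/
def NullFinite {X : Type*} [TopologicalSpace X] [AddCommGroup X] (A : Set X) : Prop :=
  ∃ x : ℕ → X, Tendsto x atTop (nhds 0) ∧ ∀ y : X, {n : ℕ | x n + y ∈ A}.Finite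

/-- A set `A` is *Haar-open* if for every compact `K` and `p ∈ K` there is `x` such that
`K ∩ (A + x)` is a neighborhood of `p` in the subspace `K`. -/
def HaarOpen {X : Type*} [TopologicalSpace X] [AddCommGroup X] (A : Set X) : Prop :=
  ∀ K : Set X, IsCompact K → ∀ p ∈ K, ∃ x : X,
    K ∩ ((fun a => a + x) '' A) ∈ nhdsWithin p K

section ThinAux

/-- The homeomorphism between `Bool` and `ZMod 2`. -/
def boolZModEquiv : Bool ≃ ZMod 2 where
  toFun b := cond b 1 0
  invFun z := decide (z = 1)
  left_inv := by decide
  right_inv := by decide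

def boolZModHomeo : Bool ≃ₜ ZMod 2 :=
  { boolZModEquiv with
    continuous_toFun := continuous_of_discreteTopology
    continuous_invFun := continuous_of_discreteTopology }

/-- The Cantor cube as the compact group `ℕ → ZMod 2`. -/
noncomputable def cantorHomeo : (ℕ → Bool) ≃ₜ (ℕ → ZMod 2) :=
  Homeomorph.piCongrRight fun _ => boolZModHomeo

lemma cantorHomeo_apply (s : ℕ → Bool) (m : ℕ) :
    cantorHomeo s m = boolZModEquiv (s m) := rfl

lemma cantorHomeo_symm_apply (a : ℕ → ZMod 2) (m : ℕ) :
    cantorHomeo.symm a m = boolZModEquiv.symm (a m) := rfl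

noncomputable abbrev muG : Measure (ℕ → ZMod 2) :=
  Measure.addHaarMeasure (⊤ : TopologicalSpace.PositiveCompacts (ℕ → ZMod 2))

instance : IsProbabilityMeasure muG := by
  constructor
  have h := Measure.addHaarMeasure_self
    (K₀ := (⊤ : TopologicalSpace.PositiveCompacts (ℕ → ZMod 2)))
  simpa using h

lemma tendsto_single : Tendsto (fun n => (Pi.single n 1 : ℕ → ZMod 2)) atTop (nhds 0) := by
  rw [tendsto_pi_nhds]
  intro m
  refine Tendsto.congr' ?_ (tendsto_const_nhds (x := (0 : ZMod 2)))
  exact eventually_atTop.2 ⟨m + 1, fun n hn => ((Pi.single_eq_of_ne (M := fun _ : ℕ => ZMod 2) (by omega) 1).symm)⟩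

/-- No difference of two elements of (the copy on `ℕ → ZMod 2` of) a thin set
is a standard basis vector. -/
lemma thin_not_single {T : Set (ℕ → Bool)} (hthin : IsThinSet T) (n : ℕ) :
    (Pi.single n 1 : ℕ → ZMod 2) ∉
      (cantorHomeo.symm ⁻¹' T) - (cantorHomeo.symm ⁻¹' T) := by
  rintro hmem
  rw [Set.mem_sub] at hmem
  obtain ⟨a, ha, b, hb, hab⟩ := hmem
  have hagree : ∀ m : ℕ, m ≠ n → cantorHomeo.symm a m = cantorHomeo.symm b m := by
    intro m hm
    have h1 : a m - b m = (Pi.single n 1 : ℕ → ZMod 2) m := by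
      rw [← hab]; rfl
    rw [Pi.single_eq_of_ne hm] at h1
    have h2 : a m = b m := sub_eq_zero.mp h1
    rw [cantorHomeo_symm_apply, cantorHomeo_symm_apply, h2]
  have heq := hthin n _ ha _ hb hagree
  have hab' : a = b := by
    have := congrArg cantorHomeo heq
    simpa using this
  rw [hab', sub_self] at hab
  have := congrFun hab n
  rw [Pi.single_eq_same] at this
  exact one_ne_zero this.symm

/-- A measurable thin subset of the Cantor cube is null (transported to `ℕ → ZMod 2`). -/
lemma thin_null {T : Set (ℕ → Bool)} (hT : MeasurableSet T) (hthin : IsThinSet T) :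
    muG (cantorHomeo.symm ⁻¹' T) = 0 := by
  by_contra h0
  have hm : MeasurableSet (cantorHomeo.symm ⁻¹' T) :=
    hT.preimage cantorHomeo.symm.continuous.measurable
  have hpos : 0 < muG (cantorHomeo.symm ⁻¹' T) := pos_iff_ne_zero.mpr h0
  have hnhds := MeasureTheory.Measure.sub_mem_nhds_zero_of_addHaar_pos muG _ hm hpos
  obtain ⟨n, hn⟩ := (tendsto_single.eventually_mem hnhds).exists
  exact thin_not_single hthin n hn

/-- A Borel thin subset of the Cantor cube is meager. -/
lemma thin_meager {T : Set (ℕ → Bool)} (hT : MeasurableSet T) (hthin : IsThinSet T) :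
    IsMeagre T := by
  by_contra hnm
  obtain ⟨U, hUo, hTU⟩ := hT.residualEq_isOpen
  have hres : {x | x ∈ T ↔ x ∈ U} ∈ residual (ℕ → Bool) := Filter.eventuallyEq_set.mp hTU
  have hUT : IsMeagre (U \ T) := by
    rw [IsMeagre]
    refine Filter.mem_of_superset hres fun x hx => ?_
    simp only [Set.mem_compl_iff, Set.mem_diff, not_and, not_not]
    exact fun hU => hx.mpr hU
  have hTUm : IsMeagre (T \ U) := by
    rw [IsMeagre]
    refine Filter.mem_of_superset hres fun x hx => ?_
    simp only [Set.mem_compl_iff, Set.mem_diff, not_and, not_not]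
    exact fun hTx => hx.mp hTx
  have hUne : U.Nonempty := by
    rcases U.eq_empty_or_nonempty with hU | hU
    · exact absurd (hTUm.mono (by rw [hU]; simp)) hnm
    · exact hU
  obtain ⟨u, hu⟩ := hUne
  have hnu : U ∈ nhds u := hUo.mem_nhds hu
  rw [nhds_pi, Filter.mem_pi] at hnu
  obtain ⟨I, hIfin, t, htm, hsub⟩ := hnu
  set C : Set (ℕ → Bool) := I.pi (fun i => {u i}) with hC
  have hCU : C ⊆ U := by
    refine subset_trans (Set.pi_mono fun i _ => ?_) hsub
    intro y hy
    rw [Set.mem_singleton_iff] at hy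
    rw [hy]
    have := htm i
    rwa [nhds_discrete, Filter.mem_pure] at this
  obtain ⟨n, hnI⟩ := hIfin.infinite_compl.nonempty
  set σ : (ℕ → Bool) ≃ₜ (ℕ → Bool) :=
    cantorHomeo.trans ((Homeomorph.addRight ((Pi.single n 1 : ℕ → ZMod 2))).trans
      cantorHomeo.symm) with hσ
  have hσ_apply : ∀ s m, σ s m =
      boolZModEquiv.symm (boolZModEquiv (s m) + (Pi.single n 1 : ℕ → ZMod 2) m) := by
    intro s m; rfl
  have hσm : ∀ m, m ≠ n → ∀ s, σ s m = s m := by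
    intro m hm s
    rw [hσ_apply, Pi.single_eq_of_ne hm, add_zero, Equiv.symm_apply_apply]
  have hσn : ∀ s : ℕ → Bool, σ s n ≠ s n := by
    intro s
    rw [hσ_apply, Pi.single_eq_same]
    cases s n <;> decide
  have hσC : ∀ s ∈ C, σ s ∈ C := by
    intro s hs i hi
    have : i ≠ n := fun h => hnI (h ▸ hi)
    rw [Set.mem_singleton_iff, hσm i this s]
    exact hs i hi
  have hmeag : ((C \ T) ∪ (σ ⁻¹' (U \ T)))ᶜ ∈ residual (ℕ → Bool) := by
    have h1 : IsMeagre (C \ T) := hUT.mono (Set.diff_subset_diff_left hCU)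
    have h2 : IsMeagre (σ ⁻¹' (U \ T)) :=
      hUT.preimage_of_isOpenMap σ.continuous σ.isOpenMap
    rw [Set.compl_union]
    exact Filter.inter_mem h1 h2
  have hdense : Dense ((C \ T) ∪ (σ ⁻¹' (U \ T)))ᶜ := dense_of_mem_residual hmeag
  have hCopen : IsOpen C := isOpen_set_pi hIfin fun i _ => isOpen_discrete _
  have hCne : C.Nonempty := ⟨u, fun i _ => rfl⟩
  obtain ⟨s, hsGood, hsC⟩ := hdense.exists_mem_open hCopen hCne
  rw [Set.mem_compl_iff, Set.mem_union, not_or] at hsGood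
  obtain ⟨h1, h2⟩ := hsGood
  have hsT : s ∈ T := by
    by_contra hs
    exact h1 ⟨hsC, hs⟩
  have hσT : σ s ∈ T := by
    by_contra hs
    exact h2 ⟨hCU (hσC s hsC), hs⟩
  have heq := hthin n s hsT (σ s) hσT (fun m hm => (hσm m hm s).symm)
  exact hσn s (by rw [← heq])

end ThinAux

set_option maxHeartbeats 1000000 in
/-- Every Borel Haar-thin subset of a Polish Abelian group is Haar-null and Haar-meager. -/
theorem statement15 {X : Type*} [TopologicalSpace X] [AddCommGroup X]
    [IsTopologicalAddGroup X] [PolishSpace X] [MeasurableSpace X] [BorelSpace X]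
    (A : Set X) (hBorel : MeasurableSet A) (hA : HaarThin A) :
    HaarNull A ∧ HaarMeager A := by
  obtain ⟨f, hf, hthin⟩ := hA
  have hfm : Measurable f := hf.measurable
  have himg : ∀ x : X, MeasurableSet ((fun a => a + x) '' A) := by
    intro x
    have : (fun a : X => a + x) '' A = (fun a : X => a - x) ⁻¹' A := by
      ext y
      constructor
      · rintro ⟨a, ha, rfl⟩
        simpa using ha
      · intro hy
        exact ⟨y - x, hy, by simp⟩
    rw [this]
    exact hBorel.preimage (measurable_id.sub_const x)
  constructor
  · refine ⟨muG.map (f ∘ cantorHomeo.symm), ?_, ?_⟩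
    · exact Measure.isProbabilityMeasure_map
        (hfm.comp cantorHomeo.symm.continuous.measurable).aemeasurable
    · intro x
      rw [Measure.map_apply (hfm.comp cantorHomeo.symm.continuous.measurable) (himg x)]
      exact thin_null ((himg x).preimage hfm) (hthin x)
  · exact ⟨f, hf, fun x => thin_meager ((himg x).preimage hfm) (hthin x)⟩
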